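/- Let n ≥ 2 and let f ∈ K[x₁,…,xₙ] be a nonzero polynomial whose partial derivatives f_{x₁},…,f_{xₙ} are not all zero. Let D be a greatest common divisor of f_{x₁},…,f_{xₙ} and write f_{x_j} = D·u_j. If the K[x₁,…,xₙ]-module V_f is an internal direct sum V_f = V_f⁰ ⊕ W, where W is a free submodule of rank 1, then f belongs to the ideal ⟨u₁,…,uₙ⟩ = ⟨f_{x₁}/D,…,f_{xₙ}/D⟩ of K[x₁,…,xₙ]. -/

import Mathlib

open MvPolynomial

/-- The `K[x₁,…,xₙ]`-submodule `V_f` of `K[x₁,…,xₙ]ⁿ` consisting of the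
polynomial vector fields `∑ Pⱼ ∂/∂xⱼ` leaving the hypersurface `f = 0`
invariant, i.e. `∑ Pⱼ f_{xⱼ} = k f` for some cofactor `k`. -/
noncomputable def Vf {K : Type*} [Field K] {n : ℕ} (f : MvPolynomial (Fin n) K) :
    Submodule (MvPolynomial (Fin n) K) (Fin n → MvPolynomial (Fin n) K) where
  carrier := {P | ∃ k : MvPolynomial (Fin n) K, ∑ j, P j * pderiv j f = k * f}
  add_mem' := by
    rintro P Q ⟨k, hk⟩ ⟨l, hl⟩
    refine ⟨k + l, ?_⟩
    simp only [Pi.add_apply, add_mul, Finset.sum_add_distrib, hk, hl]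
  zero_mem' := ⟨0, by simp⟩
  smul_mem' := by
    rintro c P ⟨k, hk⟩
    refine ⟨c * k, ?_⟩
    simp only [Pi.smul_apply, smul_eq_mul, mul_assoc, ← Finset.mul_sum, hk]
/-- The submodule `V_f⁰ ⊆ V_f` of vector fields with zero cofactor:
`∑ Pⱼ f_{xⱼ} = 0`. -/
noncomputable def Vf0 {K : Type*} [Field K] {n : ℕ} (f : MvPolynomial (Fin n) K) :
    Submodule (MvPolynomial (Fin n) K) (Fin n → MvPolynomial (Fin n) K) where
  carrier := {P | ∑ j, P j * pderiv j f = 0}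
  add_mem' := by
    intro P Q hP hQ
    simp only [Set.mem_setOf_eq, Pi.add_apply, add_mul,
      Finset.sum_add_distrib] at *
    rw [hP, hQ, add_zero]
  zero_mem' := by simp
  smul_mem' := by
    intro c P hP
    simp only [Set.mem_setOf_eq, Pi.smul_apply, smul_eq_mul, mul_assoc,
      ← Finset.mul_sum] at *
    rw [hP, mul_zero]

/-- Let `n ≥ 2` and `f ∈ K[x₁,…,xₙ]` be nonzero with partial
derivatives not all zero, `D` a gcd of the `f_{xⱼ}`, and `f_{xⱼ} = D·uⱼ`.
If `V_f = V_f⁰ ⊕ W` (internal direct sum) with `W` a free submodule of rank 1,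
then `f ∈ ⟨u₁,…,uₙ⟩ = ⟨f_{x₁}/D,…,f_{xₙ}/D⟩`. -/
theorem stmt8 (K : Type*) [Field K] [Algebra K ℂ]
    (n : ℕ) (hn : 2 ≤ n)
    (f : MvPolynomial (Fin n) K) (hf : f ≠ 0)
    (hder : ¬ ∀ j, pderiv j f = 0)
    (D : MvPolynomial (Fin n) K) (u : Fin n → MvPolynomial (Fin n) K)
    (hu : ∀ j, pderiv j f = D * u j)
    (hgcd : ∀ e : MvPolynomial (Fin n) K, (∀ j, e ∣ pderiv j f) → e ∣ D)
    (W : Submodule (MvPolynomial (Fin n) K) (Fin n → MvPolynomial (Fin n) K))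
    (hfreeW : Module.Free (MvPolynomial (Fin n) K) W)
    (hrankW : Module.rank (MvPolynomial (Fin n) K) W = 1)
    (hsup : Vf0 f ⊔ W = Vf f)
    (hinf : Vf0 f ⊓ W = ⊥) :
    f ∈ Ideal.span (Set.range u) := by
  classical
  haveI := hfreeW
  let ι := Module.Free.ChooseBasisIndex (MvPolynomial (Fin n) K) W
  let b : Module.Basis ι (MvPolynomial (Fin n) K) W :=
    Module.Free.chooseBasis (MvPolynomial (Fin n) K) W
  have hcard : Cardinal.mk ι = 1 := by
    rw [← Module.Free.rank_eq_card_chooseBasisIndex (MvPolynomial (Fin n) K) W,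
      hrankW]
  obtain ⟨hsub, hne⟩ := Cardinal.eq_one_iff_unique.mp hcard
  haveI : Subsingleton ι := hsub
  obtain ⟨i0⟩ := hne
  haveI : Fintype ι := Fintype.ofSubsingleton i0
  let Gw : W := b i0
  let G : Fin n → MvPolynomial (Fin n) K := (Gw : Fin n → MvPolynomial (Fin n) K)
  have hrepr : ∀ w : W, w = b.repr w i0 • Gw := by
    intro w
    conv_lhs => rw [← b.sum_repr w]
    rw [Fintype.sum_eq_single i0 (fun i hi => absurd (Subsingleton.elim i i0) hi)]
  -- G belongs to Vf, with cofactor g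
  have hWle : W ≤ Vf f := by rw [← hsup]; exact le_sup_right
  obtain ⟨g, hg⟩ : ∃ k : MvPolynomial (Fin n) K,
      ∑ j, G j * pderiv j f = k * f := hWle Gw.2
  -- decompose f • e_j
  have hdec : ∀ j : Fin n, ∃ c : MvPolynomial (Fin n) K, pderiv j f = c * g := by
    intro j
    have hEj : (fun i => if i = j then f else 0) ∈ Vf f := by
      refine ⟨pderiv j f, ?_⟩
      rw [Finset.sum_eq_single j]
      · simp [mul_comm]
      · intro i _ hij; simp [hij]
      · simp
    rw [← hsup] at hEj
    obtain ⟨y, hy, z, hz, hyz⟩ := Submodule.mem_sup.mp hEj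
    obtain ⟨c, hz'⟩ : ∃ c, z = c • G := by
      refine ⟨b.repr ⟨z, hz⟩ i0, ?_⟩
      have h1 := hrepr ⟨z, hz⟩
      have h2 := congrArg (Subtype.val) h1
      simpa using h2
    refine ⟨c, ?_⟩
    have hsum : ∑ i, (fun i => if i = j then f else 0) i * pderiv i f
        = pderiv j f * f := by
      rw [Finset.sum_eq_single j]
      · simp [mul_comm]
      · intro i _ hij; simp [hij]
      · simp
    have hy0 : ∑ i, y i * pderiv i f = 0 := hy
    have key : pderiv j f * f = (c * g) * f := by
      rw [← hsum, ← hyz]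
      calc ∑ i, (y + z) i * pderiv i f
          = (∑ i, y i * pderiv i f) + ∑ i, z i * pderiv i f := by
            simp [add_mul, Finset.sum_add_distrib]
        _ = ∑ i, z i * pderiv i f := by rw [hy0, zero_add]
        _ = c * (∑ i, G i * pderiv i f) := by
            rw [hz', Finset.mul_sum]
            exact Finset.sum_congr rfl (fun i _ => by
              simp [Pi.smul_apply, smul_eq_mul, mul_assoc])
        _ = (c * g) * f := by rw [hg, mul_assoc]
    exact mul_right_cancel₀ hf key
  -- g ≠ 0
  have hgne : g ≠ 0 := by
    intro h0
    apply hder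
    intro j
    obtain ⟨c, hc⟩ := hdec j
    rw [hc, h0, mul_zero]
  -- g ∣ D
  obtain ⟨h, hD⟩ : g ∣ D := by
    apply hgcd
    intro j
    obtain ⟨c, hc⟩ := hdec j
    exact ⟨c, by rw [hc, mul_comm]⟩
  -- f = ∑ (h * G i) * u i
  have key : g * f = g * ∑ i, (h * G i) * u i := by
    rw [← hg, Finset.mul_sum]
    refine Finset.sum_congr rfl (fun i _ => ?_)
    rw [hu i, hD]
    ring
  have hfeq : f = ∑ i, (h * G i) * u i := mul_left_cancel₀ hgne key
  rw [hfeq]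
  exact Ideal.sum_mem _ (fun i _ =>
    Ideal.mul_mem_left _ _ (Ideal.subset_span ⟨i, rfl⟩))
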